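/- Let G be a countable group acting by measure-preserving transformations on a standard probability space (X, 𝒳, μ). If 𝒜 and ℬ are two G-invariant complete sub-σ-algebras with Rokhlin entropy zero, then their join 𝒜 ∨ ℬ also has Rokhlin entropy zero. -/

import Mathlib

open MeasureTheory Filter
open scoped ENNReal

/-- A measure-preserving action of a group `G` on a measure space `(X, μ)`. -/
structure MeasAction (G : Type*) [Group G] (X : Type*) (mX : MeasurableSpace X)
    (μ : Measure X) where
  T : G → X → X
  map_one : ∀ x, T 1 x = x
  map_mul : ∀ g h x, T g (T h x) = T (g * h) x
  measurePreserving : ∀ g, MeasurePreserving (T g) μ μ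

/-- A countable (ℕ-indexed) partition: pairwise disjoint sets covering the space. -/
def IsCountablePartition {X : Type*} (A : ℕ → Set X) : Prop :=
  Pairwise (Function.onFun Disjoint A) ∧ (⋃ n, A n) = Set.univ

/-- Shannon entropy of a countable family of sets, with the convention 0 log 0 = 0. -/
noncomputable def partitionEntropy {X : Type*} {mX : MeasurableSpace X} (μ : Measure X)
    {ι : Type*} (A : ι → Set X) : ℝ≥0∞ :=
  ∑' i, ENNReal.ofReal (Real.negMulLog (μ (A i)).toReal)

/-- `m` is a `G`-invariant, `μ`-complete sub-σ-algebra of the ambient σ-algebra. -/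
def IsInvCompleteSub {X : Type*} {G : Type*} [Group G] {mX : MeasurableSpace X}
    (μ : Measure X) (a : MeasAction G X mX μ) (m : MeasurableSpace X) : Prop :=
  m ≤ mX ∧
  (∀ (g : G) (s : Set X), MeasurableSet[m] s → MeasurableSet[m] (a.T g ⁻¹' s)) ∧
  (∀ s t : Set X, MeasurableSet[m] s → MeasurableSet[mX] t → μ (symmDiff s t) = 0 →
    MeasurableSet[m] t)

/-- The smallest invariant complete sub-σ-algebra making all atoms of `A` measurable. -/
def genAlg {X : Type*} {G : Type*} [Group G] {mX : MeasurableSpace X} (μ : Measure X)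
    (a : MeasAction G X mX μ) (A : ℕ → Set X) : MeasurableSpace X :=
  sInf {m | IsInvCompleteSub μ a m ∧ ∀ n, MeasurableSet[m] (A n)}

/-- The partition `A` generates the sub-σ-algebra `m`: `A` is `m`-measurable and `m` is the
smallest invariant complete sub-σ-algebra making `A` measurable. -/
def Generates {X : Type*} {G : Type*} [Group G] {mX : MeasurableSpace X} (μ : Measure X)
    (a : MeasAction G X mX μ) (A : ℕ → Set X) (m : MeasurableSpace X) : Prop :=
  (∀ n, MeasurableSet[m] (A n)) ∧ genAlg μ a A = m

/-- Rokhlin entropy of an invariant complete sub-σ-algebra: the infimum of Shannon entropies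
of countable partitions measurable with respect to `m` and generating `m`. -/
noncomputable def rokhlinEntropy {X : Type*} {G : Type*} [Group G] {mX : MeasurableSpace X}
    (μ : Measure X) (a : MeasAction G X mX μ) (m : MeasurableSpace X) : ℝ≥0∞ :=
  ⨅ (A : ℕ → Set X) (_ : IsCountablePartition A ∧ Generates μ a A m),
    partitionEntropy μ A

/-- The partition `A` is generating for the system: the invariant complete σ-algebra it
generates is the full σ-algebra, up to null sets. -/
def IsGeneratingPartition {X : Type*} {G : Type*} [Group G] {mX : MeasurableSpace X}
    (μ : Measure X) (a : MeasAction G X mX μ) (A : ℕ → Set X) : Prop :=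
  ∀ s : Set X, MeasurableSet s →
    ∃ t : Set X, MeasurableSet[genAlg μ a A] t ∧ μ (symmDiff s t) = 0

/-- Rokhlin entropy of a dynamical system: infimum of Shannon entropies of countable
generating partitions. -/
noncomputable def sysRokhlinEntropy {X : Type*} {G : Type*} [Group G] {mX : MeasurableSpace X}
    (μ : Measure X) (a : MeasAction G X mX μ) : ℝ≥0∞ :=
  ⨅ (A : ℕ → Set X) (_ : IsCountablePartition A ∧ (∀ n, MeasurableSet (A n)) ∧
      IsGeneratingPartition μ a A),
    partitionEntropy μ A

/-- Ergodicity of a measure-preserving action: every a.e.-invariant set is null or conull. -/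
def IsErgodicAction {X : Type*} {G : Type*} [Group G] {mX : MeasurableSpace X}
    (μ : Measure X) (a : MeasAction G X mX μ) : Prop :=
  ∀ s : Set X, MeasurableSet s → (∀ g : G, μ (symmDiff s (a.T g ⁻¹' s)) = 0) →
    μ s = 0 ∨ μ s = 1

section Aux

variable {X : Type*} {G : Type*} [Group G] {mX : MeasurableSpace X}
  (μ : Measure X) (a : MeasAction G X mX μ)

lemma isInvCompleteSub_top' : IsInvCompleteSub μ a mX :=
  ⟨le_rfl, fun g _ hs => (a.measurePreserving g).measurable hs, fun _ t _ ht _ => ht⟩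

lemma isInvCompleteSub_sInf' {S : Set (MeasurableSpace X)} (hne : S.Nonempty)
    (hS : ∀ m ∈ S, IsInvCompleteSub μ a m) : IsInvCompleteSub μ a (sInf S) := by
  obtain ⟨m0, hm0⟩ := hne
  refine ⟨le_trans (sInf_le hm0) (hS m0 hm0).1, ?_, ?_⟩
  · intro g s hs
    rw [MeasurableSpace.measurableSet_sInf] at hs ⊢
    exact fun m hm => (hS m hm).2.1 g s (hs m hm)
  · intro s t hs ht h0
    rw [MeasurableSpace.measurableSet_sInf] at hs ⊢
    exact fun m hm => (hS m hm).2.2 s t (hs m hm) ht h0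

lemma genAlg_isInvCompleteSub' (A : ℕ → Set X) (hA : ∀ n, MeasurableSet[mX] (A n)) :
    IsInvCompleteSub μ a (genAlg μ a A) :=
  isInvCompleteSub_sInf' μ a ⟨mX, isInvCompleteSub_top' μ a, hA⟩ (fun _ hm => hm.1)

lemma measurableSet_genAlg' (A : ℕ → Set X) (n : ℕ) :
    MeasurableSet[genAlg μ a A] (A n) := by
  rw [genAlg, MeasurableSpace.measurableSet_sInf]
  exact fun m hm => hm.2 n

lemma genAlg_le' (A : ℕ → Set X) {m : MeasurableSpace X} (hm : IsInvCompleteSub μ a m)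
    (hA : ∀ n, MeasurableSet[m] (A n)) : genAlg μ a A ≤ m := sInf_le ⟨hm, hA⟩

/-- Pointwise Gibbs-type inequality. -/
lemma pointwise_gibbs' {p r1 r2 : ℝ} (hp : 0 ≤ p) (h1 : p ≤ r1) (h2 : p ≤ r2)
    (hr1 : r1 ≤ 1) (hr2 : r2 ≤ 1) :
    Real.negMulLog p + p ≤ p * (-Real.log r1) + p * (-Real.log r2) + r1 * r2 := by
  rcases eq_or_lt_of_le hp with h | h
  · have h0 : p = 0 := h.symm
    subst h0
    have : (0:ℝ) ≤ r1 * r2 := mul_nonneg h1 h2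
    simp [Real.negMulLog]
    linarith
  · have hr1p : 0 < r1 := lt_of_lt_of_le h h1
    have hr2p : 0 < r2 := lt_of_lt_of_le h h2
    have key : Real.log ((r1 * r2) / p) ≤ (r1 * r2) / p - 1 :=
      Real.log_le_sub_one_of_pos (by positivity)
    have hlog : Real.log ((r1 * r2) / p) = Real.log r1 + Real.log r2 - Real.log p := by
      rw [Real.log_div (by positivity) (ne_of_gt h),
        Real.log_mul (ne_of_gt hr1p) (ne_of_gt hr2p)]
    rw [hlog] at key
    have hmul := mul_le_mul_of_nonneg_left key hp
    have hdiv : p * ((r1 * r2) / p - 1) = r1 * r2 - p := by field_simp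
    rw [hdiv] at hmul
    rw [Real.negMulLog]
    nlinarith [hmul]

/-- Subadditivity of entropy for the join of two countable partitions. -/
lemma entropy_join_le' [IsProbabilityMeasure μ] (A B : ℕ → Set X)
    (hA : ∀ n, MeasurableSet (A n)) (hB : ∀ n, MeasurableSet (B n))
    (hpA : IsCountablePartition A) (hpB : IsCountablePartition B) :
    partitionEntropy μ (fun x : ℕ × ℕ => A x.1 ∩ B x.2) ≤
      partitionEntropy μ A + partitionEntropy μ B := by
  have hAfin : ∀ i, μ (A i) ≠ ∞ := fun i => measure_ne_top μ _
  have hBfin : ∀ j, μ (B j) ≠ ∞ := fun j => measure_ne_top μ _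
  have hABfin : ∀ (x : ℕ × ℕ), μ (A x.1 ∩ B x.2) ≠ ∞ := fun x => measure_ne_top μ _
  have hsum1 : ∀ i, (∑' j, μ (A i ∩ B j)) = μ (A i) := by
    intro i
    rw [← measure_iUnion (fun j k hjk =>
        ((hpB.1 hjk).mono Set.inter_subset_right Set.inter_subset_right))
      (fun j => (hA i).inter (hB j))]
    rw [← Set.inter_iUnion, hpB.2, Set.inter_univ]
  have hsum2 : ∀ j, (∑' i, μ (A i ∩ B j)) = μ (B j) := by
    intro j
    rw [← measure_iUnion (fun i k hik =>
        ((hpA.1 hik).mono Set.inter_subset_left Set.inter_subset_left))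
      (fun i => (hA i).inter (hB j))]
    rw [← Set.iUnion_inter, hpA.2, Set.univ_inter]
  have hsumA : (∑' i, μ (A i)) = 1 := by
    rw [← measure_iUnion hpA.1 hA, hpA.2, measure_univ]
  have hsumB : (∑' j, μ (B j)) = 1 := by
    rw [← measure_iUnion hpB.1 hB, hpB.2, measure_univ]
  have htot : (∑' x : ℕ × ℕ, μ (A x.1 ∩ B x.2)) = 1 := by
    rw [ENNReal.tsum_prod']
    simp_rw [hsum1]
    exact hsumA
  have hp_nonneg : ∀ s : Set X, (0:ℝ) ≤ (μ s).toReal := fun _ => ENNReal.toReal_nonneg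
  have hle_one : ∀ s : Set X, (μ s).toReal ≤ 1 := by
    intro s
    have := prob_le_one (μ := μ) (s := s)
    calc (μ s).toReal ≤ (1 : ℝ≥0∞).toReal :=
          ENNReal.toReal_mono ENNReal.one_ne_top this
      _ = 1 := by simp
  have hple1 : ∀ x : ℕ × ℕ, (μ (A x.1 ∩ B x.2)).toReal ≤ (μ (A x.1)).toReal :=
    fun x => ENNReal.toReal_mono (hAfin _) (measure_mono Set.inter_subset_left)
  have hple2 : ∀ x : ℕ × ℕ, (μ (A x.1 ∩ B x.2)).toReal ≤ (μ (B x.2)).toReal :=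
    fun x => ENNReal.toReal_mono (hBfin _) (measure_mono Set.inter_subset_right)
  -- conversion helper
  have hfin : ∀ c : ℝ≥0∞, c ≠ ∞ →
      c * ENNReal.ofReal (-Real.log c.toReal) = ENNReal.ofReal (Real.negMulLog c.toReal) := by
    intro c hc
    have h1 : Real.negMulLog c.toReal = c.toReal * (-Real.log c.toReal) := by
      rw [Real.negMulLog]; ring
    rw [h1, ENNReal.ofReal_mul ENNReal.toReal_nonneg, ENNReal.ofReal_toReal hc]
  -- pointwise ENNReal inequality
  have hpoint : ∀ x : ℕ × ℕ,
      ENNReal.ofReal (Real.negMulLog (μ (A x.1 ∩ B x.2)).toReal) + μ (A x.1 ∩ B x.2) ≤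
        ENNReal.ofReal ((μ (A x.1 ∩ B x.2)).toReal * (-Real.log (μ (A x.1)).toReal)) +
          ENNReal.ofReal ((μ (A x.1 ∩ B x.2)).toReal * (-Real.log (μ (B x.2)).toReal)) +
          μ (A x.1) * μ (B x.2) := by
    intro x
    have h2 : 0 ≤ (μ (A x.1 ∩ B x.2)).toReal * (-Real.log (μ (A x.1)).toReal) :=
      mul_nonneg (hp_nonneg _) (neg_nonneg.2 (Real.log_nonpos (hp_nonneg _) (hle_one _)))
    have h3 : 0 ≤ (μ (A x.1 ∩ B x.2)).toReal * (-Real.log (μ (B x.2)).toReal) :=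
      mul_nonneg (hp_nonneg _) (neg_nonneg.2 (Real.log_nonpos (hp_nonneg _) (hle_one _)))
    have h1 : 0 ≤ Real.negMulLog (μ (A x.1 ∩ B x.2)).toReal :=
      Real.negMulLog_nonneg (hp_nonneg _) ((hple1 x).trans (hle_one _))
    calc ENNReal.ofReal (Real.negMulLog (μ (A x.1 ∩ B x.2)).toReal) + μ (A x.1 ∩ B x.2)
        = ENNReal.ofReal (Real.negMulLog (μ (A x.1 ∩ B x.2)).toReal +
            (μ (A x.1 ∩ B x.2)).toReal) := by
          rw [ENNReal.ofReal_add h1 (hp_nonneg _), ENNReal.ofReal_toReal (hABfin x)]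
      _ ≤ ENNReal.ofReal ((μ (A x.1 ∩ B x.2)).toReal * (-Real.log (μ (A x.1)).toReal) +
            (μ (A x.1 ∩ B x.2)).toReal * (-Real.log (μ (B x.2)).toReal) +
            (μ (A x.1)).toReal * (μ (B x.2)).toReal) :=
          ENNReal.ofReal_le_ofReal (pointwise_gibbs' (hp_nonneg _) (hple1 x) (hple2 x)
            (hle_one _) (hle_one _))
      _ = ENNReal.ofReal ((μ (A x.1 ∩ B x.2)).toReal * (-Real.log (μ (A x.1)).toReal)) +
            ENNReal.ofReal ((μ (A x.1 ∩ B x.2)).toReal * (-Real.log (μ (B x.2)).toReal)) +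
            μ (A x.1) * μ (B x.2) := by
          have hAB : ENNReal.ofReal ((μ (A x.1)).toReal * (μ (B x.2)).toReal) =
              μ (A x.1) * μ (B x.2) := by
            rw [ENNReal.ofReal_mul (hp_nonneg _), ENNReal.ofReal_toReal (hAfin _),
              ENNReal.ofReal_toReal (hBfin _)]
          rw [ENNReal.ofReal_add (add_nonneg h2 h3) (mul_nonneg (hp_nonneg _) (hp_nonneg _)),
            ENNReal.ofReal_add h2 h3, hAB]
  -- sum up the pointwise inequality
  have hsumineq := ENNReal.tsum_le_tsum hpoint
  rw [ENNReal.tsum_add, ENNReal.tsum_add, ENNReal.tsum_add] at hsumineq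
  rw [htot] at hsumineq
  -- identify the three sums on the right
  have hT1 : (∑' x : ℕ × ℕ,
      ENNReal.ofReal ((μ (A x.1 ∩ B x.2)).toReal * (-Real.log (μ (A x.1)).toReal))) =
      partitionEntropy μ A := by
    rw [ENNReal.tsum_prod']
    unfold partitionEntropy
    congr 1
    ext i
    have hterm : ∀ j : ℕ,
        ENNReal.ofReal ((μ (A i ∩ B j)).toReal * (-Real.log (μ (A i)).toReal)) =
        μ (A i ∩ B j) * ENNReal.ofReal (-Real.log (μ (A i)).toReal) := by
      intro j
      rw [ENNReal.ofReal_mul (hp_nonneg _), ENNReal.ofReal_toReal (hABfin (i, j))]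
    simp_rw [hterm]
    rw [ENNReal.tsum_mul_right, hsum1 i]
    exact hfin (μ (A i)) (hAfin i)
  have hT2 : (∑' x : ℕ × ℕ,
      ENNReal.ofReal ((μ (A x.1 ∩ B x.2)).toReal * (-Real.log (μ (B x.2)).toReal))) =
      partitionEntropy μ B := by
    rw [ENNReal.tsum_prod', ENNReal.tsum_comm]
    unfold partitionEntropy
    congr 1
    ext j
    have hterm : ∀ i : ℕ,
        ENNReal.ofReal ((μ (A i ∩ B j)).toReal * (-Real.log (μ (B j)).toReal)) =
        μ (A i ∩ B j) * ENNReal.ofReal (-Real.log (μ (B j)).toReal) := by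
      intro i
      rw [ENNReal.ofReal_mul (hp_nonneg _), ENNReal.ofReal_toReal (hABfin (i, j))]
    simp_rw [hterm]
    rw [ENNReal.tsum_mul_right, hsum2 j]
    exact hfin (μ (B j)) (hBfin j)
  have hT3 : (∑' x : ℕ × ℕ, μ (A x.1) * μ (B x.2)) = 1 := by
    rw [ENNReal.tsum_prod']
    simp_rw [ENNReal.tsum_mul_left]
    rw [hsumB]
    simp_rw [mul_one]
    exact hsumA
  rw [hT1, hT2, hT3] at hsumineq
  -- cancel the `1` on both sides
  exact (ENNReal.add_le_add_iff_right (a := 1) ENNReal.one_ne_top).1 hsumineq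

end Aux
/-- The join of two invariant complete sub-σ-algebras of zero Rokhlin entropy
has zero Rokhlin entropy. -/
theorem rokhlinEntropy_join_of_zero
    {X : Type*} {mX : MeasurableSpace X} [StandardBorelSpace X]
    {G : Type*} [Group G] [Countable G]
    (μ : Measure X) [IsProbabilityMeasure μ]
    (a : MeasAction G X mX μ)
    (𝒜 ℬ : MeasurableSpace X)
    (h𝒜 : IsInvCompleteSub μ a 𝒜) (hℬ : IsInvCompleteSub μ a ℬ)
    (h𝒜0 : rokhlinEntropy μ a 𝒜 = 0) (hℬ0 : rokhlinEntropy μ a ℬ = 0) :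
    rokhlinEntropy μ a (sInf {m | IsInvCompleteSub μ a m ∧ 𝒜 ≤ m ∧ ℬ ≤ m}) = 0 := by
  set S : Set (MeasurableSpace X) := {m | IsInvCompleteSub μ a m ∧ 𝒜 ≤ m ∧ ℬ ≤ m} with hS
  have hmXS : mX ∈ S := ⟨isInvCompleteSub_top' μ a, h𝒜.1, hℬ.1⟩
  have h𝒥sub : IsInvCompleteSub μ a (sInf S) :=
    isInvCompleteSub_sInf' μ a ⟨mX, hmXS⟩ (fun _ hm => hm.1)
  have h𝒜𝒥 : 𝒜 ≤ sInf S := le_sInf (fun m hm => hm.2.1)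
  have hℬ𝒥 : ℬ ≤ sInf S := le_sInf (fun m hm => hm.2.2)
  refine le_antisymm ?_ zero_le
  refine ENNReal.le_of_forall_pos_le_add fun ε hε _ => ?_
  rw [zero_add]
  have hhalf : (0 : ℝ≥0∞) < (ε : ℝ≥0∞) / 2 :=
    ENNReal.div_pos (by exact_mod_cast hε.ne') ENNReal.ofNat_ne_top
  -- extract partitions with small entropy
  have hA' : rokhlinEntropy μ a 𝒜 < (ε : ℝ≥0∞) / 2 := by rw [h𝒜0]; exact hhalf
  have hB' : rokhlinEntropy μ a ℬ < (ε : ℝ≥0∞) / 2 := by rw [hℬ0]; exact hhalf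
  rw [rokhlinEntropy] at hA' hB'
  simp only [iInf_lt_iff] at hA' hB'
  obtain ⟨A, hPA, hEA⟩ := hA'
  obtain ⟨B, hPB, hEB⟩ := hB'
  -- measurability of the atoms in the ambient σ-algebra
  have hAmeas : ∀ n, MeasurableSet[mX] (A n) := fun n => h𝒜.1 _ (hPA.2.1 n)
  have hBmeas : ∀ n, MeasurableSet[mX] (B n) := fun n => hℬ.1 _ (hPB.2.1 n)
  -- the joined partition
  set e : ℕ × ℕ ≃ ℕ := Nat.pairEquiv with he
  set C : ℕ → Set X := fun n => A (e.symm n).1 ∩ B (e.symm n).2 with hC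
  have hCval : ∀ i j : ℕ, C (e (i, j)) = A i ∩ B j := by
    intro i j
    rw [hC]
    simp
  have hCmeas : ∀ n, MeasurableSet[mX] (C n) :=
    fun n => (hAmeas _).inter (hBmeas _)
  -- C is a countable partition
  have hCpart : IsCountablePartition C := by
    constructor
    · intro m n hmn
      have hxy : e.symm m ≠ e.symm n := fun h => hmn (e.symm.injective h)
      by_cases hfst : (e.symm m).1 = (e.symm n).1
      · have hsnd : (e.symm m).2 ≠ (e.symm n).2 := fun h => hxy (Prod.ext hfst h)
        exact (hPB.1.1 hsnd).mono Set.inter_subset_right Set.inter_subset_right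
      · exact (hPA.1.1 hfst).mono Set.inter_subset_left Set.inter_subset_left
    · ext x
      simp only [Set.mem_iUnion, Set.mem_univ, iff_true]
      have hx1 : x ∈ ⋃ i, A i := hPA.1.2 ▸ Set.mem_univ x
      have hx2 : x ∈ ⋃ j, B j := hPB.1.2 ▸ Set.mem_univ x
      obtain ⟨i, hi⟩ := Set.mem_iUnion.1 hx1
      obtain ⟨j, hj⟩ := Set.mem_iUnion.1 hx2
      exact ⟨e (i, j), by rw [hCval]; exact ⟨hi, hj⟩⟩
  -- C is measurable w.r.t. the join
  have hCjoin : ∀ n, MeasurableSet[sInf S] (C n) :=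
    fun n => (h𝒜𝒥 _ (hPA.2.1 _)).inter (hℬ𝒥 _ (hPB.2.1 _))
  -- C generates the join
  have hAgen : ∀ i, MeasurableSet[genAlg μ a C] (A i) := by
    intro i
    have hAi : (⋃ j, C (e (i, j))) = A i := by
      have : (⋃ j, C (e (i, j))) = ⋃ j, A i ∩ B j := by
        apply Set.iUnion_congr
        intro j
        rw [hCval]
      rw [this, ← Set.inter_iUnion, hPB.1.2, Set.inter_univ]
    rw [← hAi]
    exact MeasurableSet.iUnion (fun j => measurableSet_genAlg' μ a C (e (i, j)))
  have hBgen : ∀ j, MeasurableSet[genAlg μ a C] (B j) := by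
    intro j
    have hBj : (⋃ i, C (e (i, j))) = B j := by
      have : (⋃ i, C (e (i, j))) = ⋃ i, A i ∩ B j := by
        apply Set.iUnion_congr
        intro i
        rw [hCval]
      rw [this, ← Set.iUnion_inter, hPA.1.2, Set.univ_inter]
    rw [← hBj]
    exact MeasurableSet.iUnion (fun i => measurableSet_genAlg' μ a C (e (i, j)))
  have hgenC : genAlg μ a C = sInf S := by
    apply le_antisymm
    · exact genAlg_le' μ a C h𝒥sub hCjoin
    · refine sInf_le ⟨genAlg_isInvCompleteSub' μ a C hCmeas, ?_, ?_⟩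
      · rw [← hPA.2.2]
        exact genAlg_le' μ a A (genAlg_isInvCompleteSub' μ a C hCmeas) hAgen
      · rw [← hPB.2.2]
        exact genAlg_le' μ a B (genAlg_isInvCompleteSub' μ a C hCmeas) hBgen
  -- entropy bound
  have hent : partitionEntropy μ C ≤ partitionEntropy μ A + partitionEntropy μ B := by
    have hre : partitionEntropy μ C =
        partitionEntropy μ (fun x : ℕ × ℕ => A x.1 ∩ B x.2) := by
      unfold partitionEntropy
      exact (e.symm.tsum_eq fun x : ℕ × ℕ =>
        ENNReal.ofReal (Real.negMulLog (μ (A x.1 ∩ B x.2)).toReal)).symm ▸ rfl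
    rw [hre]
    exact entropy_join_le' μ A B hAmeas hBmeas hPA.1 hPB.1
  -- conclude
  have hle : rokhlinEntropy μ a (sInf S) ≤ partitionEntropy μ C :=
    iInf_le_of_le C (iInf_le_of_le ⟨hCpart, hCjoin, hgenC⟩ le_rfl)
  calc rokhlinEntropy μ a (sInf S) ≤ partitionEntropy μ C := hle
    _ ≤ partitionEntropy μ A + partitionEntropy μ B := hent
    _ ≤ (ε : ℝ≥0∞) / 2 + (ε : ℝ≥0∞) / 2 := add_le_add hEA.le hEB.le
    _ = (ε : ℝ≥0∞) := ENNReal.add_halves _
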